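/- Let λ > 0. Let A* be a generalized Mahalanobis operator on H and B* a generalized Mahalanobis operator on V satisfying ⟨A* x, y⟩ = ⟨B* x, y⟩ for all x, y ∈ V. Then for u ∈ V, the pair (A*, u) minimizes f(A, v) + λ‖v‖_A² over all pairs (A, v) with A a generalized Mahalanobis operator on H and v ∈ H if and only if (B*, u) minimizes f_V(B, v) + λ‖v‖_B² over all pairs (B, v) with B a generalized Mahalanobis operator on V and v ∈ V; moreover in this case the two optimal values are equal: f(A*, u) + λ‖u‖_{A*}² = f_V(B*, u) + λ‖u‖_{B*}². -/

import Mathlib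

open scoped RealInnerProductSpace

/-- A continuous linear operator on a real inner product space is a *generalized Mahalanobis
operator* if it is self-adjoint and positive definite. -/
def IsGenMahalanobis {H : Type*} [NormedAddCommGroup H] [InnerProductSpace ℝ H]
    (A : H →L[ℝ] H) : Prop :=
  (∀ x y : H, ⟪A x, y⟫ = ⟪x, A y⟫) ∧ ∀ x : H, x ≠ 0 → 0 < ⟪A x, x⟫

/-- A linear operator on a (subspace viewed as an) inner product space is a *generalized
Mahalanobis operator* if it is self-adjoint and positive definite. -/
def IsGenMahalanobisLin {V : Type*} [NormedAddCommGroup V] [InnerProductSpace ℝ V]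
    (B : V →ₗ[ℝ] V) : Prop :=
  (∀ x y : V, ⟪B x, y⟫ = ⟪x, B y⟫) ∧ ∀ x : V, x ≠ 0 → 0 < ⟪B x, x⟫

/-- The paired-comparison empirical objective
`f(A, u) = Σ_i ℓ (sgn (‖z^i_1 - u‖_A² - ‖z^i_2 - u‖_A²)) (y i)`,
where `‖x‖_A² = ⟪A x, x⟫`. -/
noncomputable def pairObj {H : Type*} [NormedAddCommGroup H] [InnerProductSpace ℝ H]
    {n : ℕ} (ℓ : ℝ → ℝ → ℝ) (z₁ z₂ : Fin n → H) (y : Fin n → ℝ)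
    (A : H → H) (u : H) : ℝ :=
  ∑ i, ℓ (Real.sign (⟪A (z₁ i - u), z₁ i - u⟫ - ⟪A (z₂ i - u), z₂ i - u⟫)) (y i)


section Aux
variable {H : Type*} [NormedAddCommGroup H] [InnerProductSpace ℝ H] [CompleteSpace H]
  (V : Submodule ℝ H) [FiniteDimensional ℝ V]

lemma orthogonalProjection_inner_eq_zero {K : Submodule ℝ H} [K.HasOrthogonalProjection]
    (v w : H) (hw : w ∈ K) : ⟪v - (K.orthogonalProjectionOnto v : H), w⟫ = 0 :=
  Submodule.starProjection_inner_eq_zero (K := K) v w hw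

/-- Compression of an operator to V. -/
noncomputable def comprRT (A : H →L[ℝ] H) : V →ₗ[ℝ] V :=
  (V.orthogonalProjectionOnto).toLinearMap ∘ₗ (A.toLinearMap ∘ₗ V.subtype)

lemma comprRT_inner (A : H →L[ℝ] H) (x x' : V) :
    ⟪comprRT V A x, x'⟫ = ⟪A (x:H), (x':H)⟫ := by
  have h := orthogonalProjection_inner_eq_zero (A (x:H)) (x':H) x'.2
  have : ⟪comprRT V A x, x'⟫ = ⟪(↑(V.orthogonalProjectionOnto (A (x:H))) : H), (x':H)⟫ := rfl
  rw [this]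
  have := inner_sub_left (𝕜 := ℝ) (A (x:H)) (↑(V.orthogonalProjectionOnto (A (x:H)))) (x':H)
  linarith [h, this]

lemma comprRT_isGM (A : H →L[ℝ] H) (hA : IsGenMahalanobis A) :
    IsGenMahalanobisLin (comprRT V A) := by
  constructor
  · intro x x'
    have h1 : ⟪x, comprRT V A x'⟫ = ⟪comprRT V A x', x⟫ := real_inner_comm _ _
    rw [h1, comprRT_inner, comprRT_inner, hA.1]
    exact real_inner_comm _ _
  · intro x hx
    rw [comprRT_inner]
    exact hA.2 _ (fun h => hx (by exact_mod_cast Subtype.ext h))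

/-- the A-orthogonal projection of v onto V exists -/
lemma exists_Aproj (A : H →L[ℝ] H) (hA : IsGenMahalanobis A) (v : H) :
    ∃ w : V, ∀ x : V, ⟪A (v - (w:H)), (x:H)⟫ = 0 := by
  have hinj : Function.Injective (comprRT V A) := by
    intro a b hab
    by_contra hne
    have h := (comprRT V A).map_sub a b
    have hpos := comprRT_isGM V A hA |>.2 (a - b) (sub_ne_zero.mpr hne)
    rw [(comprRT V A).map_sub, hab, sub_self] at hpos
    simp [inner_zero_left] at hpos
  have hsurj := (LinearMap.injective_iff_surjective).mp hinj
  obtain ⟨w, hw⟩ := hsurj (V.orthogonalProjectionOnto (A v))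
  refine ⟨w, fun x => ?_⟩
  have h1 : ⟪A (w:H), (x:H)⟫ = ⟪comprRT V A w, x⟫ := (comprRT_inner V A w x).symm
  have h2 : ⟪(↑(V.orthogonalProjectionOnto (A v)) : H), (x:H)⟫ = ⟪A v, (x:H)⟫ := by
    have := orthogonalProjection_inner_eq_zero (A v) (x:H) x.2
    have h3 := inner_sub_left (𝕜 := ℝ) (A v) (↑(V.orthogonalProjectionOnto (A v))) (x:H)
    linarith
  rw [map_sub, inner_sub_left, h1, hw]
  have : ⟪(V.orthogonalProjectionOnto (A v) : V), x⟫ = ⟪(↑(V.orthogonalProjectionOnto (A v)) : H), (x:H)⟫ := rfl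
  rw [this, h2]
  ring

/-- Extension of a gen-Mahalanobis operator on V to all of H. -/
noncomputable def extRT (B : V →ₗ[ℝ] V) : H →L[ℝ] H :=
  V.subtypeL.comp ((LinearMap.toContinuousLinearMap B).comp (V.orthogonalProjectionOnto))
    + (ContinuousLinearMap.id ℝ H - V.subtypeL.comp (V.orthogonalProjectionOnto))

lemma extRT_apply (B : V →ₗ[ℝ] V) (x : H) :
    extRT V B x = ↑(B (V.orthogonalProjectionOnto x)) + (x - ↑(V.orthogonalProjectionOnto x)) := rfl

lemma extRT_coe (B : V →ₗ[ℝ] V) (x : V) : extRT V B (x:H) = ↑(B x) := by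
  rw [extRT_apply, Submodule.orthogonalProjectionOnto_mem_subspace_eq_self]
  abel

lemma extRT_isGM (B : V →ₗ[ℝ] V) (hB : IsGenMahalanobisLin B) :
    IsGenMahalanobis (extRT V B) := by
  have key : ∀ x y : H, ⟪extRT V B x, y⟫ =
      ⟪B (V.orthogonalProjectionOnto x), V.orthogonalProjectionOnto y⟫
        + ⟪x - ↑(V.orthogonalProjectionOnto x), y - ↑(V.orthogonalProjectionOnto y)⟫ := by
    intro x y
    rw [extRT_apply, inner_add_left]
    have h1 : ⟪(↑(B (V.orthogonalProjectionOnto x)) : H), y⟫ =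
        ⟪B (V.orthogonalProjectionOnto x), V.orthogonalProjectionOnto y⟫ := by
      have hz := orthogonalProjection_inner_eq_zero y (↑(B (V.orthogonalProjectionOnto x)) : H)
        (B (V.orthogonalProjectionOnto x)).2
      have hsym : ⟪y - ↑(V.orthogonalProjectionOnto y), (↑(B (V.orthogonalProjectionOnto x)) : H)⟫
          = ⟪(↑(B (V.orthogonalProjectionOnto x)) : H), y - ↑(V.orthogonalProjectionOnto y)⟫ :=
        real_inner_comm _ _
      have h3 := inner_sub_right (𝕜 := ℝ) (↑(B (V.orthogonalProjectionOnto x)) : H) y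
        (↑(V.orthogonalProjectionOnto y))
      have : ⟪B (V.orthogonalProjectionOnto x), V.orthogonalProjectionOnto y⟫
          = ⟪(↑(B (V.orthogonalProjectionOnto x)) : H), (↑(V.orthogonalProjectionOnto y) : H)⟫ := rfl
      rw [this]; rw [hsym] at hz; linarith
    have h2 : ⟪x - ↑(V.orthogonalProjectionOnto x), y⟫ =
        ⟪x - ↑(V.orthogonalProjectionOnto x), y - ↑(V.orthogonalProjectionOnto y)⟫ := by
      have hz := orthogonalProjection_inner_eq_zero x (↑(V.orthogonalProjectionOnto y) : H)
        (V.orthogonalProjectionOnto y).2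
      have h3 := inner_sub_right (𝕜 := ℝ) (x - ↑(V.orthogonalProjectionOnto x)) y
        (↑(V.orthogonalProjectionOnto y))
      linarith
    rw [h1, h2]
  constructor
  · intro x y
    have h1 : ⟪x, extRT V B y⟫ = ⟪extRT V B y, x⟫ := real_inner_comm _ _
    rw [h1, key, key, hB.1]
    have h2 : ⟪V.orthogonalProjectionOnto x, B (V.orthogonalProjectionOnto y)⟫
        = ⟪B (V.orthogonalProjectionOnto y), V.orthogonalProjectionOnto x⟫ := real_inner_comm _ _
    rw [h2, hB.1]
    congr 1
    all_goals first | rfl | exact real_inner_comm _ _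
  · intro x hx
    rw [key]
    have hd : V.orthogonalProjectionOnto x ≠ 0 ∨ x - ↑(V.orthogonalProjectionOnto x) ≠ 0 := by
      by_contra hc
      push_neg at hc
      apply hx
      have := hc.2
      rw [hc.1] at this
      simpa using this
    have hn1 : (0:ℝ) ≤ ⟪B (V.orthogonalProjectionOnto x), V.orthogonalProjectionOnto x⟫ := by
      rcases eq_or_ne (V.orthogonalProjectionOnto x) 0 with h | h
      · simp [h]
      · exact (hB.2 _ h).le
    have hn2 : (0:ℝ) ≤ ⟪x - ↑(V.orthogonalProjectionOnto x), x - ↑(V.orthogonalProjectionOnto x)⟫ :=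
      real_inner_self_nonneg
    rcases hd with h | h
    · linarith [hB.2 _ h]
    · have : (0:ℝ) < ⟪x - ↑(V.orthogonalProjectionOnto x), x - ↑(V.orthogonalProjectionOnto x)⟫ :=
        lt_of_le_of_ne real_inner_self_nonneg
          (fun hc => h (real_inner_self_nonpos.mp hc.ge))
      linarith

lemma quad_shift (A : H →L[ℝ] H) (hA : ∀ x y : H, ⟪A x, y⟫ = ⟪x, A y⟫)
    (v : H) (w : V) (hw : ∀ x : V, ⟪A (v - (w:H)), (x:H)⟫ = 0) (x : V) :
    ⟪A ((x:H) - v), (x:H) - v⟫ =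
      ⟪A ((x:H) - (w:H)), (x:H) - (w:H)⟫ + ⟪A (v - (w:H)), v - (w:H)⟫ := by
  have hx : (x:H) - v = ((x:H) - (w:H)) - (v - (w:H)) := by abel
  set a := (x:H) - (w:H) with ha
  set b := v - (w:H) with hb
  have expand : ⟪A (a - b), a - b⟫ = ⟪A a, a⟫ - ⟪A a, b⟫ - ⟪A b, a⟫ + ⟪A b, b⟫ := by
    simp only [map_sub, inner_sub_left, inner_sub_right]
    ring
  have h0 : ⟪A b, a⟫ = 0 := by
    have : ((x - w : V) : H) = a := rfl
    rw [← this]; exact hw (x - w)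
  have h1 : ⟪A a, b⟫ = ⟪A b, a⟫ := by rw [hA]; exact real_inner_comm _ _
  rw [hx, expand]
  linarith

lemma quad_le (A : H →L[ℝ] H) (hA : IsGenMahalanobis A) (v : H) (w : V)
    (hw : ∀ x : V, ⟪A (v - (w:H)), (x:H)⟫ = 0) :
    ⟪A (w:H), (w:H)⟫ ≤ ⟪A v, v⟫ := by
  have hb : (0:ℝ) ≤ ⟪A (v - (w:H)), v - (w:H)⟫ := by
    rcases eq_or_ne (v - (w:H)) 0 with h | h
    · simp [h]
    · exact (hA.2 _ h).le
  have h0 : ⟪A (v - (w:H)), (w:H)⟫ = 0 := hw w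
  have h1 : ⟪A (w:H), v - (w:H)⟫ = 0 := by
    rw [hA.1]
    rw [real_inner_comm]
    exact hw w
  have expand : ⟪A ((w:H) + (v - (w:H))), (w:H) + (v - (w:H))⟫ =
      ⟪A (w:H), (w:H)⟫ + ⟪A (w:H), v - (w:H)⟫ + ⟪A (v - (w:H)), (w:H)⟫
        + ⟪A (v - (w:H)), v - (w:H)⟫ := by
    simp only [map_add, inner_add_left, inner_add_right]
    ring
  have hv : (w:H) + (v - (w:H)) = v := by abel
  rw [hv] at expand
  rw [expand]
  linarith

lemma pairObj_coe_eq {n : ℕ} (ℓ : ℝ → ℝ → ℝ) (z₁ z₂ : Fin n → H) (y : Fin n → ℝ)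
    (hz₁ : ∀ i, z₁ i ∈ V) (hz₂ : ∀ i, z₂ i ∈ V)
    (A : H → H) (B : V → V)
    (h : ∀ x : V, ⟪A (x:H), (x:H)⟫ = ⟪B x, x⟫) (u : V) :
    pairObj ℓ z₁ z₂ y A (u:H) =
      pairObj ℓ (fun i => (⟨z₁ i, hz₁ i⟩ : V)) (fun i => (⟨z₂ i, hz₂ i⟩ : V)) y B u := by
  unfold pairObj
  refine Finset.sum_congr rfl fun i _ => ?_
  have e1 : ⟪A (z₁ i - (u:H)), z₁ i - (u:H)⟫ =
      ⟪B ((⟨z₁ i, hz₁ i⟩ : V) - u), (⟨z₁ i, hz₁ i⟩ : V) - u⟫ := h (⟨z₁ i, hz₁ i⟩ - u)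
  have e2 : ⟪A (z₂ i - (u:H)), z₂ i - (u:H)⟫ =
      ⟪B ((⟨z₂ i, hz₂ i⟩ : V) - u), (⟨z₂ i, hz₂ i⟩ : V) - u⟫ := h (⟨z₂ i, hz₂ i⟩ - u)
  rw [e1, e2]

lemma pairObj_shift {n : ℕ} (ℓ : ℝ → ℝ → ℝ) (z₁ z₂ : Fin n → H) (y : Fin n → ℝ)
    (hz₁ : ∀ i, z₁ i ∈ V) (hz₂ : ∀ i, z₂ i ∈ V)
    (A : H →L[ℝ] H) (hA : IsGenMahalanobis A) (v : H) (w : V)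
    (hw : ∀ x : V, ⟪A (v - (w:H)), (x:H)⟫ = 0) :
    pairObj ℓ z₁ z₂ y ⇑A v = pairObj ℓ z₁ z₂ y ⇑A (w:H) := by
  unfold pairObj
  refine Finset.sum_congr rfl fun i _ => ?_
  have e1 : ⟪A (z₁ i - v), z₁ i - v⟫ =
      ⟪A (z₁ i - (w:H)), z₁ i - (w:H)⟫ + ⟪A (v - (w:H)), v - (w:H)⟫ :=
    quad_shift V A hA.1 v w hw ⟨z₁ i, hz₁ i⟩
  have e2 : ⟪A (z₂ i - v), z₂ i - v⟫ =
      ⟪A (z₂ i - (w:H)), z₂ i - (w:H)⟫ + ⟪A (v - (w:H)), v - (w:H)⟫ :=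
    quad_shift V A hA.1 v w hw ⟨z₂ i, hz₂ i⟩
  have hd : ⟪A (z₁ i - v), z₁ i - v⟫ - ⟪A (z₂ i - v), z₂ i - v⟫ =
      ⟪A (z₁ i - (w:H)), z₁ i - (w:H)⟫ - ⟪A (z₂ i - (w:H)), z₂ i - (w:H)⟫ := by
    linarith
  rw [hd]

end Aux

/-- Representer theorem for simultaneous metric and preference learning.
Let `λ > 0`, and let `A*` (on `H`) and `B*` (on `V`) be generalized Mahalanobis operators
agreeing on `V`. Then for `u ∈ V`, `(A*, u)` minimizes the regularized objective
`f(A, v) + λ‖v‖_A²` over `H` iff `(B*, u)` minimizes `f_V(B, v) + λ‖v‖_B²` over `V`,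
and in this case the two optimal values are equal. -/
theorem representer_theorem_metric_preference
    {H : Type*} [NormedAddCommGroup H] [InnerProductSpace ℝ H] [CompleteSpace H]
    (V : Submodule ℝ H) [FiniteDimensional ℝ V]
    {n : ℕ} (ℓ : ℝ → ℝ → ℝ) (z₁ z₂ : Fin n → H) (y : Fin n → ℝ)
    (hz₁ : ∀ i, z₁ i ∈ V) (hz₂ : ∀ i, z₂ i ∈ V)
    (hy : ∀ i, y i = 1 ∨ y i = -1)
    (lam : ℝ) (hlam : 0 < lam)
    (Astar : H →L[ℝ] H) (hAstar : IsGenMahalanobis Astar)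
    (Bstar : V →ₗ[ℝ] V) (hBstar : IsGenMahalanobisLin Bstar)
    (hagree : ∀ x y' : V, ⟪Astar (x : H), (y' : H)⟫ = ⟪Bstar x, y'⟫)
    (u : V) :
    ((∀ (A : H →L[ℝ] H), IsGenMahalanobis A → ∀ v : H,
        pairObj ℓ z₁ z₂ y ⇑Astar (u : H) + lam * ⟪Astar (u : H), (u : H)⟫ ≤
          pairObj ℓ z₁ z₂ y ⇑A v + lam * ⟪A v, v⟫) ↔
      (∀ (B : V →ₗ[ℝ] V), IsGenMahalanobisLin B → ∀ v : V,
        pairObj ℓ (fun i => (⟨z₁ i, hz₁ i⟩ : V)) (fun i => (⟨z₂ i, hz₂ i⟩ : V)) y ⇑Bstar u +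
            lam * ⟪Bstar u, u⟫ ≤
          pairObj ℓ (fun i => (⟨z₁ i, hz₁ i⟩ : V)) (fun i => (⟨z₂ i, hz₂ i⟩ : V)) y ⇑B v +
            lam * ⟪B v, v⟫)) ∧
    ((∀ (A : H →L[ℝ] H), IsGenMahalanobis A → ∀ v : H,
        pairObj ℓ z₁ z₂ y ⇑Astar (u : H) + lam * ⟪Astar (u : H), (u : H)⟫ ≤
          pairObj ℓ z₁ z₂ y ⇑A v + lam * ⟪A v, v⟫) →
      pairObj ℓ z₁ z₂ y ⇑Astar (u : H) + lam * ⟪Astar (u : H), (u : H)⟫ =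
        pairObj ℓ (fun i => (⟨z₁ i, hz₁ i⟩ : V)) (fun i => (⟨z₂ i, hz₂ i⟩ : V)) y ⇑Bstar u +
          lam * ⟪Bstar u, u⟫) := by
  -- common abbreviations
  set ζ₁ : Fin n → V := fun i => (⟨z₁ i, hz₁ i⟩ : V) with hζ₁
  set ζ₂ : Fin n → V := fun i => (⟨z₂ i, hz₂ i⟩ : V) with hζ₂
  have hstar_obj : pairObj ℓ z₁ z₂ y ⇑Astar (u : H) = pairObj ℓ ζ₁ ζ₂ y ⇑Bstar u :=
    pairObj_coe_eq V ℓ z₁ z₂ y hz₁ hz₂ ⇑Astar ⇑Bstar (fun x => hagree x x) u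
  have hstar_norm : ⟪Astar (u : H), (u : H)⟫ = ⟪Bstar u, u⟫ := hagree u u
  have hstar_eq : pairObj ℓ z₁ z₂ y ⇑Astar (u : H) + lam * ⟪Astar (u : H), (u : H)⟫ =
      pairObj ℓ ζ₁ ζ₂ y ⇑Bstar u + lam * ⟪Bstar u, u⟫ := by
    rw [hstar_obj, hstar_norm]
  refine ⟨⟨fun hH B hB v => ?_, fun hV A hA v => ?_⟩, fun _ => hstar_eq⟩
  · -- H-minimality implies V-minimality
    have key := hH (extRT V B) (extRT_isGM V B hB) (v : H)
    have hq : ∀ x : V, ⟪extRT V B (x:H), (x:H)⟫ = ⟪B x, x⟫ := by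
      intro x
      rw [extRT_coe]
      rfl
    have hobj : pairObj ℓ z₁ z₂ y ⇑(extRT V B) (v : H) = pairObj ℓ ζ₁ ζ₂ y ⇑B v :=
      pairObj_coe_eq V ℓ z₁ z₂ y hz₁ hz₂ ⇑(extRT V B) ⇑B hq v
    rw [hobj, hq v, hstar_eq] at key
    exact key
  · -- V-minimality implies H-minimality
    obtain ⟨w, hw⟩ := exists_Aproj V A hA v
    have key := hV (comprRT V A) (comprRT_isGM V A hA) w
    have hq : ∀ x : V, ⟪A (x:H), (x:H)⟫ = ⟪comprRT V A x, x⟫ :=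
      fun x => (comprRT_inner V A x x).symm
    have hobjw : pairObj ℓ z₁ z₂ y ⇑A ((w : V) : H) = pairObj ℓ ζ₁ ζ₂ y ⇑(comprRT V A) w :=
      pairObj_coe_eq V ℓ z₁ z₂ y hz₁ hz₂ ⇑A ⇑(comprRT V A) hq w
    have hshift : pairObj ℓ z₁ z₂ y ⇑A v = pairObj ℓ z₁ z₂ y ⇑A ((w : V) : H) :=
      pairObj_shift V ℓ z₁ z₂ y hz₁ hz₂ A hA v w hw
    have hnorm : ⟪comprRT V A w, w⟫ = ⟪A ((w : V) : H), ((w : V) : H)⟫ :=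
      comprRT_inner V A w w
    have hle := quad_le V A hA v w hw
    rw [hstar_eq, hshift, hobjw]
    have h2 : lam * ⟪comprRT V A w, w⟫ ≤ lam * ⟪A v, v⟫ := by
      rw [hnorm]
      exact mul_le_mul_of_nonneg_left hle hlam.le
    linarith
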